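/- Let R be a ring, π ∈ R a non-zero divisor, and f ∈ R. For all n, k ≥ 0 there is a short exact sequence 0 → R/π^n → R/π^{n+k} → R/π^k → 0 where the first map is multiplication by π^k; localizing at f and taking inverse limits over n yields a short exact sequence 0 → R⟨f⁻¹⟩ → R⟨f⁻¹⟩ → (R/π^k)[f⁻¹] → 0, where R⟨f⁻¹⟩ = lim_n (R/π^n)[f⁻¹] and the first map is multiplication by π^k. In particular π is a non-zero divisor in R⟨f⁻¹⟩ and R⟨f⁻¹⟩ is π-adically complete. -/

import Mathlib

/-!
STATEMENT 1: For a commutative ring `R`, a non-zero-divisor `π` and `f : R`, the short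
exact sequences `0 → R/π^n → R/π^{n+k} → R/π^k → 0` (first map multiplication by π^k)
localize at `f` and pass to the inverse limit over `n`, yielding a short exact sequence
`0 → R⟨f⁻¹⟩ → R⟨f⁻¹⟩ → (R/π^k)[f⁻¹] → 0` with first map multiplication by `π^k`,
where `R⟨f⁻¹⟩ = lim_n (R/π^n)[f⁻¹]` is the π-adic completion of `R[f⁻¹]`.
In particular π is a non-zero divisor in `R⟨f⁻¹⟩` and `R⟨f⁻¹⟩` is π-adically complete.
-/

section Aux

variable {A : Type} [CommRing A]

lemma auxSpanPow (a : A) (n : ℕ) :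
    ((Ideal.span {a}) ^ n • ⊤ : Ideal A) = Ideal.span {a ^ n} := by
  rw [smul_eq_mul, Ideal.mul_top, Ideal.span_singleton_pow]

lemma auxCancel {ϖ : A} (hϖ : ϖ ∈ nonZeroDivisors A) (n k : ℕ) (x : A)
    (h : ϖ ^ k * x ∈ Ideal.span {ϖ ^ (n + k)}) : x ∈ Ideal.span {ϖ ^ n} := by
  rw [Ideal.mem_span_singleton'] at h ⊢
  obtain ⟨c, hc⟩ := h
  refine ⟨c, ?_⟩
  have hk : ϖ ^ k ∈ nonZeroDivisors A := pow_mem hϖ k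
  rw [← mul_cancel_right_mem_nonZeroDivisors hk]
  rw [pow_add] at hc
  linear_combination hc

lemma AdicCompletion.transitionMap_mk (I : Ideal A) {m n : ℕ} (hmn : m ≤ n) (x : A) :
    AdicCompletion.transitionMap I A hmn (Submodule.Quotient.mk x) = Submodule.Quotient.mk x :=
  rfl

-- test algebraMap val
example (a : A) (I : Ideal A) (n : ℕ) :
    (algebraMap A (AdicCompletion I A) a).val n = Submodule.Quotient.mk a := rfl

lemma auxValZero (ϖ : A) (k : ℕ) (y : AdicCompletion (Ideal.span {ϖ}) A) :
    ((ϖ ^ k) • y).val k = 0 := by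
  obtain ⟨u, hu⟩ := Ideal.Quotient.mk_surjective (y.val k)
  rw [AdicCompletion.val_smul_apply, ← hu]
  rw [← Ideal.Quotient.mk_eq_mk, ← Submodule.Quotient.mk_smul, Submodule.Quotient.mk_eq_zero,
    auxSpanPow]
  exact Ideal.mem_span_singleton'.mpr ⟨u, by rw [smul_eq_mul]; ring⟩

lemma auxInj {ϖ : A} (hϖ : ϖ ∈ nonZeroDivisors A) (k : ℕ)
    (x : AdicCompletion (Ideal.span {ϖ}) A) (h : (ϖ ^ k) • x = 0) : x = 0 := by
  apply AdicCompletion.ext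
  intro n
  obtain ⟨s, hs⟩ := Ideal.Quotient.mk_surjective (x.val (n + k))
  have h1 : ϖ ^ k • x.val (n + k) = 0 := by
    rw [← AdicCompletion.val_smul_apply, h, AdicCompletion.val_zero_apply]
  rw [← hs, ← Ideal.Quotient.mk_eq_mk, ← Submodule.Quotient.mk_smul,
    Submodule.Quotient.mk_eq_zero, auxSpanPow] at h1
  have h2 : s ∈ Ideal.span {ϖ ^ n} := auxCancel hϖ n k s (by rwa [smul_eq_mul] at h1)
  have h3 := x.2 (Nat.le_add_right n k)
  rw [← hs, ← Ideal.Quotient.mk_eq_mk, AdicCompletion.transitionMap_mk] at h3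
  rw [AdicCompletion.val_zero_apply, ← h3, Submodule.Quotient.mk_eq_zero, auxSpanPow]
  exact h2

lemma auxDiv {ϖ : A} (hϖ : ϖ ∈ nonZeroDivisors A) (k : ℕ)
    (x : AdicCompletion (Ideal.span {ϖ}) A) (h : x.val k = 0) :
    ∃ y, x = (ϖ ^ k) • y := by
  have hs : ∀ n, ∃ s, Ideal.Quotient.mk _ s = x.val (n + k) := fun n =>
    Ideal.Quotient.mk_surjective _
  choose s hsk using hs
  have hmem : ∀ n, s n ∈ Ideal.span {ϖ ^ k} := by
    intro n
    have h3 := x.2 (Nat.le_add_left k n)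
    rw [← hsk n, ← Ideal.Quotient.mk_eq_mk, AdicCompletion.transitionMap_mk, h,
      Submodule.Quotient.mk_eq_zero, auxSpanPow] at h3
    exact h3
  have ht : ∀ n, ∃ t, t * ϖ ^ k = s n := fun n => Ideal.mem_span_singleton'.mp (hmem n)
  choose t htk using ht
  have key : ∀ {m n : ℕ}, m ≤ n → s n - s m ∈ Ideal.span {ϖ ^ (m + k)} := by
    intro m n hmn
    have h4 := x.2 (Nat.add_le_add_right hmn k)
    rw [← hsk n, ← Ideal.Quotient.mk_eq_mk, AdicCompletion.transitionMap_mk, ← hsk m,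
      ← Ideal.Quotient.mk_eq_mk] at h4
    rw [Submodule.Quotient.eq, auxSpanPow] at h4
    exact h4
  refine ⟨⟨fun n => Submodule.Quotient.mk (t n), ?_⟩, ?_⟩
  · intro m n hmn
    rw [AdicCompletion.transitionMap_mk, Submodule.Quotient.eq, auxSpanPow]
    apply auxCancel hϖ m k
    have e1 : ϖ ^ k * (t n - t m) = s n - s m := by
      linear_combination htk n - htk m
    rw [e1]
    exact key hmn
  · apply AdicCompletion.ext
    intro n
    show x.val n = ϖ ^ k • Submodule.Quotient.mk (t n)
    rw [← Submodule.Quotient.mk_smul]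
    have h3 := x.2 (Nat.le_add_right n k)
    rw [← hsk n, ← Ideal.Quotient.mk_eq_mk, AdicCompletion.transitionMap_mk] at h3
    rw [← h3]
    congr 1
    rw [smul_eq_mul]
    linear_combination - htk n

lemma auxKer {ϖ : A} (hϖ : ϖ ∈ nonZeroDivisors A) (k : ℕ)
    (x : AdicCompletion (Ideal.span {ϖ}) A) :
    x.val k = 0 ↔
      x ∈ Ideal.span {(algebraMap A (AdicCompletion (Ideal.span {ϖ}) A) ϖ) ^ k} := by
  constructor
  · intro h
    obtain ⟨y, hy⟩ := auxDiv hϖ k x h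
    rw [Ideal.mem_span_singleton']
    refine ⟨y, ?_⟩
    rw [hy, Algebra.smul_def, map_pow, mul_comm]
  · intro h
    obtain ⟨c, hc⟩ := Ideal.mem_span_singleton'.mp h
    rw [← hc, mul_comm, ← map_pow, ← Algebra.smul_def]
    exact auxValZero ϖ k c

lemma auxComplete {ϖ : A} (hϖ : ϖ ∈ nonZeroDivisors A) :
    IsAdicComplete (Ideal.span {algebraMap A (AdicCompletion (Ideal.span {ϖ}) A) ϖ})
      (AdicCompletion (Ideal.span {ϖ}) A) := by
  have h1 : IsHausdorff (Ideal.span {algebraMap A (AdicCompletion (Ideal.span {ϖ}) A) ϖ})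
      (AdicCompletion (Ideal.span {ϖ}) A) := by
    constructor
    intro x hx
    apply AdicCompletion.ext
    intro n
    have hx1 := hx n
    rw [SModEq.zero, auxSpanPow] at hx1
    rw [AdicCompletion.val_zero]
    exact (auxKer hϖ n x).mpr hx1
  have h2 : IsPrecomplete (Ideal.span {algebraMap A (AdicCompletion (Ideal.span {ϖ}) A) ϖ})
      (AdicCompletion (Ideal.span {ϖ}) A) := by
    constructor
    intro F hF
    have hval : ∀ {m n : ℕ}, m ≤ n → (F n).val m = (F m).val m := by
      intro m n hmn
      have h1 := hF hmn
      rw [SModEq.sub_mem, auxSpanPow] at h1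
      have h0 := (auxKer hϖ m (F m - F n)).mpr h1
      rw [AdicCompletion.val_sub_apply, sub_eq_zero] at h0
      exact h0.symm
    refine ⟨⟨fun n => (F n).val n, ?_⟩, ?_⟩
    · intro m n hmn
      rw [(F n).2 hmn, hval hmn]
    · intro n
      apply SModEq.sub_mem.mpr
      rw [auxSpanPow]
      apply (auxKer hϖ n _).mp
      show (F n).val n - (F n).val n = 0
      simp
  exact { toIsHausdorff := h1, toIsPrecomplete := h2 }

end Aux

theorem completed_localization_ses
    (R : Type) [CommRing R] (π : R) (hπ : π ∈ nonZeroDivisors R) (f : R) :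
    -- finite level: for all n, k the sequence 0 → R/π^n →(·π^k) R/π^{n+k} → R/π^k → 0
    -- is exact (expressed elementwise in R):
    (∀ n k : ℕ,
      -- injectivity of multiplication by π^k on R/π^n into R/π^{n+k}
      (∀ x : R, π ^ k * x ∈ Ideal.span {π ^ (n + k)} → x ∈ Ideal.span {π ^ n}) ∧
      -- exactness in the middle: image of mult. by π^k = kernel of R/π^{n+k} → R/π^k
      (∀ x : R, x ∈ Ideal.span {π ^ k} ↔ ∃ y : R, x - π ^ k * y ∈ Ideal.span {π ^ (n + k)})) ∧
    -- in the limit: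
    (let S := Localization.Away f
     let π' : S := algebraMap R S π
     let C := AdicCompletion (Ideal.span {π'}) S
     let π'' : C := algebraMap S C π'
     ∀ k : ℕ,
      -- multiplication by π^k is injective on R⟨f⁻¹⟩ (in particular π is a
      -- non-zero divisor there)
      Function.Injective (fun x : C => π'' ^ k * x) ∧
      -- there is a surjection R⟨f⁻¹⟩ → (R/π^k)[f⁻¹] with kernel π^k·R⟨f⁻¹⟩,
      -- compatible with the maps from R
      (∃ g : C →+* Localization.Away
          (Ideal.Quotient.mk (Ideal.span {π ^ k}) f),
        Function.Surjective g ∧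
        RingHom.ker g = Ideal.span {π'' ^ k} ∧
        ∀ r : R, g (algebraMap S C (algebraMap R S r)) =
          algebraMap (R ⧸ Ideal.span {π ^ k}) _ (Ideal.Quotient.mk _ r)) ∧
      -- R⟨f⁻¹⟩ is π-adically complete (and separated)
      IsAdicComplete (Ideal.span {π''}) C) := by
  constructor
  · -- finite level
    intro n k
    refine ⟨fun x h => auxCancel hπ n k x h, fun x => ?_⟩
    constructor
    · intro hx
      obtain ⟨c, hc⟩ := Ideal.mem_span_singleton'.mp hx
      exact ⟨c, by rw [← hc]; ring_nf; exact Ideal.zero_mem _⟩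
    · rintro ⟨y, hy⟩
      obtain ⟨c, hc⟩ := Ideal.mem_span_singleton'.mp hy
      exact Ideal.mem_span_singleton'.mpr ⟨y + c * π ^ n,
        by rw [pow_add] at hc; linear_combination hc⟩
  · intro S π' C π''
    -- π' is a nonzerodivisor in S
    have hπ' : π' ∈ nonZeroDivisors S := by
      rw [mem_nonZeroDivisors_iff_right]
      intro z hz
      obtain ⟨⟨r, m⟩, hrm⟩ := IsLocalization.surj (Submonoid.powers f) z
      have h1 : algebraMap R S (r * π) = 0 := by
        rw [map_mul]
        calc algebraMap R S r * π' = z * algebraMap R S m.1 * π' := by rw [hrm]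
          _ = (z * π') * algebraMap R S m.1 := by ring
          _ = 0 := by rw [hz, zero_mul]
      obtain ⟨c, hc⟩ := (IsLocalization.map_eq_zero_iff (Submonoid.powers f) S _).mp h1
      have h2 : (c.1 * r) * π = 0 := by linear_combination hc
      have h3 : algebraMap R S r = 0 :=
        (IsLocalization.map_eq_zero_iff (Submonoid.powers f) S r).mpr ⟨c, mem_nonZeroDivisors_iff_right.mp hπ _ h2⟩
      have h4 : z * algebraMap R S m.1 = 0 := by rw [hrm, h3]
      have hu := IsLocalization.map_units S m
      exact (hu.mul_left_eq_zero).mp h4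
    intro k
    refine ⟨?_, ?_, auxComplete hπ'⟩
    · -- injectivity of multiplication by π''^k
      intro a b hab
      have h0 : (π' ^ k) • (a - b) = 0 := by
        rw [Algebra.smul_def, map_pow]
        simp only at hab
        rw [mul_sub, hab, sub_self]
      have := auxInj hπ' k (a - b) h0
      exact sub_eq_zero.mp this
    · -- the surjection g
      set Q := R ⧸ Ideal.span {π ^ k} with hQ
      set mkQ : R →+* Q := Ideal.Quotient.mk (Ideal.span {π ^ k}) with hmkQ
      set Loc := Localization.Away (mkQ f) with hLoc
      set g₀ : R →+* Loc := (algebraMap Q Loc).comp mkQ with hg₀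
      have hu : IsUnit (g₀ f) := IsLocalization.Away.algebraMap_isUnit (S := Loc) (mkQ f)
      set h : S →+* Loc := Localization.awayLift g₀ f hu with hh
      have hcomp : ∀ r : R, h (algebraMap R S r) = g₀ r := fun r =>
        IsLocalization.Away.lift_eq f hu r
      have hπ'im : h π' = algebraMap Q Loc (mkQ π) := hcomp π
      have hπk0 : mkQ (π ^ k) = 0 :=
        Ideal.Quotient.eq_zero_iff_mem.mpr (Ideal.mem_span_singleton_self _)
      have hker0 : ∀ s ∈ (Ideal.span {π'} ^ k • ⊤ : Ideal S), h s = 0 := by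
        intro s hs
        rw [auxSpanPow] at hs
        obtain ⟨c, hc⟩ := Ideal.mem_span_singleton'.mp hs
        rw [← hc, map_mul, map_pow, hπ'im, ← map_pow, ← map_pow, hπk0, map_zero,
          mul_zero]
      set evalC : C →+* S ⧸ (Ideal.span {π'} ^ k • ⊤ : Ideal S) :=
        { toFun := fun x => x.val k
          map_one' := rfl
          map_mul' := fun _ _ => rfl
          map_zero' := rfl
          map_add' := fun _ _ => rfl } with hevalC
      set g : C →+* Loc := (Ideal.Quotient.lift _ h hker0).comp evalC with hg
      have hgval : ∀ s : S, g (algebraMap S C s) = h s := by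
        intro s
        show Ideal.Quotient.lift _ h hker0 ((algebraMap S C s).val k) = h s
        have : (algebraMap S C s).val k = Ideal.Quotient.mk _ s := rfl
        rw [this, Ideal.Quotient.lift_mk]
      refine ⟨g, ?_, ?_, ?_⟩
      · -- surjective
        intro z
        obtain ⟨⟨q, m⟩, hz⟩ := IsLocalization.surj (Submonoid.powers (mkQ f)) z
        obtain ⟨r, hr⟩ := Ideal.Quotient.mk_surjective q
        obtain ⟨j, hj⟩ := m.2
        have hj' : mkQ f ^ j = ↑m := hj
        have hfj : f ^ j ∈ Submonoid.powers f := ⟨j, rfl⟩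
        have u : IsUnit (algebraMap R S (f ^ j)) :=
          IsLocalization.map_units (M := Submonoid.powers f) S ⟨f ^ j, hfj⟩
        refine ⟨algebraMap S C (algebraMap R S r * ↑u.unit⁻¹), ?_⟩
        rw [hgval]
        have hux : IsUnit (algebraMap Q Loc ((mkQ f) ^ j)) := by
          rw [hj']
          exact IsLocalization.map_units Loc m
        rw [← hux.mul_left_inj]
        have e1 : h (algebraMap R S r * ↑u.unit⁻¹) * algebraMap Q Loc (mkQ f ^ j) =
            algebraMap Q Loc q := by
          have e2 : algebraMap Q Loc (mkQ f ^ j) = h (algebraMap R S (f ^ j)) := by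
            rw [hcomp, hg₀, RingHom.comp_apply]
            simp [map_pow]
          rw [e2, ← map_mul]
          have e3 : algebraMap R S r * ↑u.unit⁻¹ * algebraMap R S (f ^ j) =
              algebraMap R S r := by
            calc algebraMap R S r * ↑u.unit⁻¹ * algebraMap R S (f ^ j)
                = algebraMap R S r * (↑u.unit⁻¹ * ↑u.unit) := by rw [u.unit_spec]; ring
              _ = algebraMap R S r := by rw [Units.inv_mul, mul_one]
          rw [e3, hcomp, hg₀, RingHom.comp_apply, hr]
        rw [e1, hj', hz]
      · -- kernel
        apply le_antisymm
        · intro x hx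
          have hgx : Ideal.Quotient.lift _ h hker0 (x.val k) = 0 := hx
          obtain ⟨s, hs⟩ := Ideal.Quotient.mk_surjective (x.val k)
          rw [← hs, Ideal.Quotient.lift_mk] at hgx
          -- show s ∈ span {π'^k}
          obtain ⟨⟨r, m⟩, hrm⟩ := IsLocalization.surj (Submonoid.powers f) s
          have h1 : algebraMap Q Loc (mkQ r) = 0 := by
            have := hcomp r
            rw [hg₀, RingHom.comp_apply] at this
            rw [← this, ← hrm, map_mul, hgx, zero_mul]
          obtain ⟨c, hc⟩ := (IsLocalization.map_eq_zero_iff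
            (Submonoid.powers (mkQ f)) Loc _).mp h1
          obtain ⟨j, hj⟩ := c.2
          have hj' : mkQ f ^ j = ↑c := hj
          have hfj : f ^ j ∈ Submonoid.powers f := ⟨j, rfl⟩
          have h2 : mkQ (f ^ j * r) = 0 := by
            rw [map_mul, map_pow, hj', hc]
          have h3 : f ^ j * r ∈ Ideal.span {π ^ k} := Ideal.Quotient.eq_zero_iff_mem.mp h2
          obtain ⟨a, ha⟩ := Ideal.mem_span_singleton'.mp h3
          have w : IsUnit (algebraMap R S (f ^ j) * algebraMap R S m.1) :=
            (IsLocalization.map_units (M := Submonoid.powers f) S ⟨f ^ j, hfj⟩).mul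
              (IsLocalization.map_units S m)
          have e2 : algebraMap R S a * π' ^ k = s * ↑w.unit := by
            rw [w.unit_spec]
            have e3 := congrArg (algebraMap R S) ha
            rw [map_mul, map_mul, map_pow] at e3
            rw [← hrm] at e3
            calc algebraMap R S a * π' ^ k
                = algebraMap R S a * algebraMap R S π ^ k := rfl
              _ = algebraMap R S (f ^ j) * (s * algebraMap R S m.1) := e3
              _ = s * (algebraMap R S (f ^ j) * algebraMap R S m.1) := by ring
          have hsmem : s ∈ Ideal.span {π' ^ k} := by
            refine Ideal.mem_span_singleton'.mpr ⟨algebraMap R S a * ↑w.unit⁻¹, ?_⟩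
            calc algebraMap R S a * ↑w.unit⁻¹ * π' ^ k
                = algebraMap R S a * π' ^ k * ↑w.unit⁻¹ := by ring
              _ = s * ↑w.unit * ↑w.unit⁻¹ := by rw [e2]
              _ = s := Units.mul_inv_cancel_right _ _
          have hval0 : x.val k = 0 := by
            rw [← hs, ← Ideal.Quotient.mk_eq_mk, Submodule.Quotient.mk_eq_zero, auxSpanPow]
            exact hsmem
          exact (auxKer hπ' k x).mp hval0
        · rw [Ideal.span_le, Set.singleton_subset_iff]
          have : g (π'' ^ k) = 0 := by
            rw [map_pow]
            have e4 : g π'' = algebraMap Q Loc (mkQ π) := by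
              rw [hgval, hπ'im]
            rw [e4, ← map_pow, ← map_pow, hπk0, map_zero]
          exact this
      · -- compatibility
        intro r
        rw [hgval, hcomp]
        rfl
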